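/- arXiv:1806.08125 — 2 statements merged into one kernel-verified Lean document; each statement's English description precedes it below -/
import Mathlib

section
/- Let Φ : ℝ → (V → V) be a one-parameter group of linear isomorphisms of a finite-dimensional normed space V, and suppose there exist C, β > 0 and a splitting V = Eᵤ ⊕ Eₛ invariant under each Φ_t such that ‖Φ_t(ξₛ)‖ ≤ C e^{-βt}‖ξₛ‖ for all ξₛ ∈ Eₛ and ‖Φ_t(ξᵤ)‖ ≥ C⁻¹ e^{βt}‖ξᵤ‖ for all ξᵤ ∈ Eᵤ and t ≥ 0. Then for every ε > 0 there exists T > 0 such that for every unit vector ξ = ξᵤ + ξₛ with ‖ξᵤ‖ > ε and every t ≥ T, the distance from Φ_t(ξ)/‖Φ_t(ξ)‖ to Eᵤ is at most ε. -/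
set_option maxHeartbeats 1000000


/-- Under a hyperbolic splitting `V = Eᵤ ⊕ Eₛ` for a one-parameter group `Φ` of linear
isomorphisms, unit vectors with unstable component of size `> ε` converge projectively to
`Eᵤ`, uniformly in time. -/
theorem stmt_2 (V : Type*) [NormedAddCommGroup V] [NormedSpace ℝ V]
    [FiniteDimensional ℝ V]
    (Φ : ℝ → V ≃L[ℝ] V)
    (hgrp : ∀ s t : ℝ, ∀ ξ : V, Φ (s + t) ξ = Φ s (Φ t ξ))
    (hid : ∀ ξ : V, Φ 0 ξ = ξ)
    (Eu Es : Submodule ℝ V) (hcompl : IsCompl Eu Es)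
    (hinvu : ∀ t : ℝ, ∀ ξ ∈ Eu, Φ t ξ ∈ Eu)
    (hinvs : ∀ t : ℝ, ∀ ξ ∈ Es, Φ t ξ ∈ Es)
    (C β : ℝ) (hC : 0 < C) (hβ : 0 < β)
    (hs : ∀ t : ℝ, 0 ≤ t → ∀ ξs ∈ Es, ‖Φ t ξs‖ ≤ C * Real.exp (-β * t) * ‖ξs‖)
    (hu : ∀ t : ℝ, 0 ≤ t → ∀ ξu ∈ Eu, C⁻¹ * Real.exp (β * t) * ‖ξu‖ ≤ ‖Φ t ξu‖) :
    ∀ ε > (0:ℝ), ∃ T > (0:ℝ), ∀ ξu ∈ Eu, ∀ ξs ∈ Es, ‖ξu + ξs‖ = 1 → ε < ‖ξu‖ →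
      ∀ t : ℝ, T ≤ t →
        Metric.infDist ((‖Φ t (ξu + ξs)‖)⁻¹ • Φ t (ξu + ξs)) (Eu : Set V) ≤ ε := by
  intro ε hε
  set Pl : V →ₗ[ℝ] V := Eu.subtype.comp (Eu.linearProjOfIsCompl Es hcompl) with hPl
  set Pc : V →L[ℝ] V := LinearMap.toContinuousLinearMap Pl with hPc
  set K : ℝ := ‖Pc‖ with hK
  have hK0 : 0 ≤ K := norm_nonneg _
  set M : ℝ := (1+ε)*C^2*(1+K)/ε^2 with hM
  have hM0 : 0 < M := by positivity
  refine ⟨max 1 (Real.log M / (2*β)), lt_of_lt_of_le one_pos (le_max_left _ _), ?_⟩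
  intro ξu hξu ξs hξs hnorm hεu t ht
  have ht0 : (0:ℝ) ≤ t := le_trans (le_trans zero_le_one (le_max_left _ _)) ht
  have hexp : M ≤ Real.exp (2*β*t) := by
    have h2 : Real.log M / (2*β) ≤ t := le_trans (le_max_right _ _) ht
    have h1 : Real.log M ≤ 2*β*t := by
      rw [div_le_iff₀ (by positivity)] at h2
      nlinarith
    calc M = Real.exp (Real.log M) := (Real.exp_log hM0).symm
      _ ≤ _ := Real.exp_le_exp.mpr h1
  -- projection bound
  have hPξ : Pc (ξu + ξs) = ξu := by
    have hr : (Eu.linearProjOfIsCompl Es hcompl) ξs = 0 :=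
      Submodule.linearProjOfIsCompl_apply_right hcompl ⟨ξs, hξs⟩
    have hl : (Eu.linearProjOfIsCompl Es hcompl) ξu = ⟨ξu, hξu⟩ :=
      Submodule.linearProjOfIsCompl_apply_left hcompl ⟨ξu, hξu⟩
    simp only [hPc, hPl, LinearMap.coe_toContinuousLinearMap', LinearMap.comp_apply, map_add,
      hr, hl]
    simp
  have hξuK : ‖ξu‖ ≤ K := by
    have := Pc.le_opNorm (ξu + ξs)
    rwa [hPξ, hnorm, mul_one] at this
  have hξsK : ‖ξs‖ ≤ 1 + K := by
    have : ‖ξs‖ ≤ ‖ξu + ξs‖ + ‖ξu‖ := by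
      calc ‖ξs‖ = ‖(ξu + ξs) + (-ξu)‖ := by congr 1; abel
        _ ≤ ‖ξu + ξs‖ + ‖-ξu‖ := norm_add_le _ _
        _ = ‖ξu + ξs‖ + ‖ξu‖ := by rw [norm_neg]
    rw [hnorm] at this
    linarith
  set E : ℝ := Real.exp (β*t) with hE
  have hE0 : 0 < E := Real.exp_pos _
  have hEE : E * E = Real.exp (2*β*t) := by
    rw [hE, ← Real.exp_add]; ring_nf
  have hEinv : Real.exp (-β*t) = E⁻¹ := by
    rw [hE, ← Real.exp_neg]; ring_nf
  have ha : ‖Φ t ξs‖ ≤ C * E⁻¹ * ‖ξs‖ := by rw [← hEinv]; exact hs t ht0 ξs hξs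
  have hb : C⁻¹ * E * ‖ξu‖ ≤ ‖Φ t ξu‖ := hu t ht0 ξu hξu
  set a : ℝ := ‖Φ t ξs‖ with hadef
  set b : ℝ := ‖Φ t ξu‖ with hbdef
  have ha0 : 0 ≤ a := norm_nonneg _
  have h4 : C⁻¹ * E * ε ≤ C⁻¹ * E * ‖ξu‖ :=
    mul_le_mul_of_nonneg_left hεu.le (by positivity)
  have hbε : C⁻¹ * E * ε ≤ b := le_trans h4 hb
  have hb0 : 0 < b := lt_of_lt_of_le (by positivity) hbε
  have hMle : (1+ε)*C^2*(1+K) ≤ ε^2 * (E*E) := by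
    rw [hEE]
    have := hexp
    rw [hM, div_le_iff₀ (by positivity)] at this
    nlinarith
  have key : (1+ε)*a ≤ ε*b := by
    have h1 : (1+ε)*a ≤ (1+ε)*(C * E⁻¹ * (1+K)) := by
      have : C * E⁻¹ * ‖ξs‖ ≤ C * E⁻¹ * (1+K) := by
        apply mul_le_mul_of_nonneg_left hξsK (by positivity)
      nlinarith
    have h2 : (1+ε)*(C * E⁻¹ * (1+K)) ≤ ε*(C⁻¹ * E * ε) := by
      rw [show ε*(C⁻¹ * E * ε) = ε^2 * E / C by field_simp]
      rw [show (1+ε)*(C * E⁻¹ * (1+K)) = (1+ε)*C*(1+K) / E by field_simp]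
      rw [div_le_div_iff₀ hE0 hC]
      nlinarith
    have h3 : ε*(C⁻¹ * E * ε) ≤ ε*b := by nlinarith
    linarith
  have hab : a < b := by nlinarith
  set N : ℝ := ‖Φ t (ξu + ξs)‖ with hNdef
  have hmap : Φ t (ξu + ξs) = Φ t ξu + Φ t ξs := map_add _ _ _
  have hbN : b ≤ N + a := by
    calc b = ‖(Φ t ξu + Φ t ξs) + (-(Φ t ξs))‖ := by rw [hbdef]; congr 1; abel
      _ ≤ ‖Φ t ξu + Φ t ξs‖ + ‖-(Φ t ξs)‖ := norm_add_le _ _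
      _ = N + a := by rw [norm_neg, hNdef, hmap]
  have hN0 : 0 < N := by linarith
  have hmem : (N⁻¹ : ℝ) • (Φ t ξu) ∈ (Eu : Set V) := Eu.smul_mem _ (hinvu t ξu hξu)
  have hdist : Metric.infDist ((N)⁻¹ • Φ t (ξu + ξs)) (Eu : Set V) ≤ N⁻¹ * a := by
    refine le_trans (Metric.infDist_le_dist_of_mem hmem) ?_
    rw [dist_eq_norm, ← smul_sub, hmap, add_sub_cancel_left, norm_smul, norm_inv,
      Real.norm_eq_abs, abs_of_pos hN0]
  refine le_trans hdist ?_
  rw [inv_mul_le_iff₀ hN0]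
  nlinarith
end

section
/- Let M be a compact metric space, m₀ : M → [0,1] continuous, φ a continuous flow on M, and T > 0. Suppose that for every x ∈ M: (i) if m₀(x) ∈ (0,1) then m₀(φ_T(x)) = 1 and m₀(φ_{−T}(x)) = 0; (ii) if m₀(x) = 0 then m₀(φ_{−t}(x)) = 0 for all t ∈ [0,T], and m₀(φ_T(x)) = 0; (iii) if m₀(x) = 1 then m₀(φ_t(x)) = 1 for all t ∈ [0,T], and m₀(φ_{−T}(x)) = 1. Define m(x) = ∫_{−T}^{T} m₀(φ_t(x)) dt and F(x) = m₀(φ_T(x)) − m₀(φ_{−T}(x)). Then for every x with F(x) = 0, either m(x) < T or m(x) > T; in particular m(x) ≠ T. -/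
/-- The dichotomy at critical points of the averaged weight: if
`F(x) = m₀(φ_T x) - m₀(φ_{-T} x)` vanishes, then `m(x) = ∫_{-T}^T m₀(φ_t x) dt`
satisfies `m(x) < T` or `m(x) > T`; in particular `m(x) ≠ T`. -/
theorem stmt_6 (M : Type*) [MetricSpace M] [CompactSpace M]
    (φ : ℝ → M → M) (hφ : Continuous fun p : ℝ × M => φ p.1 p.2)
    (hflow : ∀ s t : ℝ, ∀ x : M, φ (s + t) x = φ s (φ t x))
    (hφ0 : ∀ x : M, φ 0 x = x)
    (m₀ : M → ℝ) (hm₀ : Continuous m₀) (hm₀01 : ∀ x, m₀ x ∈ Set.Icc (0:ℝ) 1)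
    (T : ℝ) (hT : 0 < T)
    (h1 : ∀ x : M, m₀ x ∈ Set.Ioo (0:ℝ) 1 → m₀ (φ T x) = 1 ∧ m₀ (φ (-T) x) = 0)
    (h2 : ∀ x : M, m₀ x = 0 →
      (∀ t ∈ Set.Icc (0:ℝ) T, m₀ (φ (-t) x) = 0) ∧ m₀ (φ T x) = 0)
    (h3 : ∀ x : M, m₀ x = 1 →
      (∀ t ∈ Set.Icc (0:ℝ) T, m₀ (φ t x) = 1) ∧ m₀ (φ (-T) x) = 1)
    (m F : M → ℝ)
    (hm : ∀ x, m x = ∫ t in (-T)..T, m₀ (φ t x))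
    (hF : ∀ x, F x = m₀ (φ T x) - m₀ (φ (-T) x)) :
    ∀ x : M, F x = 0 → (m x < T ∨ T < m x) ∧ m x ≠ T := by
  intro x hFx
  set g : ℝ → ℝ := fun t => m₀ (φ t x) with hg
  have hgc : Continuous g := hm₀.comp (hφ.comp (continuous_id.prodMk continuous_const))
  have hgint : ∀ a b : ℝ, IntervalIntegrable g MeasureTheory.volume a b := fun a b =>
    hgc.intervalIntegrable a b
  have hsplit : m x = (∫ t in (-T)..(0:ℝ), g t) + ∫ t in (0:ℝ)..T, g t := by
    rw [hm x, ← intervalIntegral.integral_add_adjacent_intervals (hgint (-T) 0) (hgint 0 T)]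
  have key : m x < T ∨ T < m x := by
    rcases lt_or_eq_of_le (hm₀01 x).1 with hpos | hzero
    · rcases lt_or_eq_of_le (hm₀01 x).2 with hlt | hone
      · -- m₀ x ∈ (0,1): contradiction with F x = 0
        exfalso
        have := h1 x ⟨hpos, hlt⟩
        rw [hF x, this.1, this.2] at hFx
        norm_num at hFx
      · -- m₀ x = 1
        right
        have h3x := h3 x hone
        have hI2 : (∫ t in (0:ℝ)..T, g t) = T := by
          rw [intervalIntegral.integral_congr (g := fun _ => (1:ℝ))
            (fun t ht => by
              rw [Set.uIcc_of_le hT.le] at ht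
              exact h3x.1 t ht)]
          simp
        have hI1 : (0:ℝ) < ∫ t in (-T)..(0:ℝ), g t := by
          have := intervalIntegral.integral_lt_integral_of_continuousOn_of_le_of_exists_lt
            (f := fun _ => (0:ℝ)) (g := g) (a := -T) (b := 0)
            (by linarith) continuousOn_const hgc.continuousOn
            (fun t ht => (hm₀01 _).1)
            ⟨0, ⟨by linarith, le_refl 0⟩, by simp [hg, hφ0, hone]⟩
          simpa using this
        rw [hsplit, hI2]; linarith
    · -- m₀ x = 0
      left
      have h2x := h2 x hzero.symm
      have hI1 : (∫ t in (-T)..(0:ℝ), g t) = 0 := by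
        rw [intervalIntegral.integral_congr (g := fun _ => (0:ℝ))
          (fun t ht => by
            rw [Set.uIcc_of_le (by linarith : (-T) ≤ 0)] at ht
            have := h2x.1 (-t) ⟨by linarith [ht.2], by linarith [ht.1]⟩
            simpa [hg] using this)]
        simp
      have hI2 : (∫ t in (0:ℝ)..T, g t) < T := by
        have := intervalIntegral.integral_lt_integral_of_continuousOn_of_le_of_exists_lt
          (f := g) (g := fun _ => (1:ℝ)) (a := 0) (b := T)
          hT hgc.continuousOn continuousOn_const
          (fun t ht => (hm₀01 _).2)
          ⟨0, ⟨le_refl 0, hT.le⟩, by simp [hg, hφ0, ← hzero]⟩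
        simpa using this
      rw [hsplit, hI1]; linarith
  exact ⟨key, by rcases key with h | h <;> [exact ne_of_lt h; exact ne_of_gt h]⟩
end
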